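/- Let C(x) = exp(−(2/√x)·arctan(1/√x)) for x > 0 and fix p > 0. Then there is δ₀ > 0 such that for every δ ∈ (0, δ₀) there exists a unique ε(δ) > 0 with C(ε(δ)) = p·C(δ), and moreover ε(δ)/δ → 1 as δ → 0⁺. -/

import Mathlib

open Real Filter Set

/-- The contraction coefficient of the saddle-node transition map. -/
noncomputable def sandleNodeC (x : ℝ) : ℝ :=
  Real.exp (-(2 / Real.sqrt x) * Real.arctan (1 / Real.sqrt x))

/-- Auxiliary: the negative logarithm of `sandleNodeC`. -/
noncomputable def snH (x : ℝ) : ℝ := 2 / Real.sqrt x * Real.arctan (1 / Real.sqrt x)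

lemma sandleNodeC_eq (x : ℝ) : sandleNodeC x = Real.exp (-(snH x)) := by
  simp [sandleNodeC, snH]

lemma arctan_pos' {t : ℝ} (ht : 0 < t) : 0 < Real.arctan t := by
  have := Real.arctan_strictMono ht
  simpa [Real.arctan_zero] using this

lemma arctan_le_self' {t : ℝ} (ht : 0 ≤ t) : Real.arctan t ≤ t := by
  have h1 : 0 ≤ Real.arctan t := by
    rcases eq_or_lt_of_le ht with rfl | ht'
    · simp [Real.arctan_zero]
    · exact (arctan_pos' ht').le
  have h2 := Real.le_tan h1 (Real.arctan_lt_pi_div_two t)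
  rwa [Real.tan_arctan] at h2

lemma snH_pos {x : ℝ} (hx : 0 < x) : 0 < snH x := by
  have hs : 0 < Real.sqrt x := Real.sqrt_pos.mpr hx
  have := arctan_pos' (by positivity : (0:ℝ) < 1 / Real.sqrt x)
  have : 0 < 2 / Real.sqrt x * Real.arctan (1 / Real.sqrt x) := by positivity
  simpa [snH] using this

lemma snH_strictAnti {x y : ℝ} (hx : 0 < x) (hxy : x < y) : snH y < snH x := by
  have hsx : 0 < Real.sqrt x := Real.sqrt_pos.mpr hx
  have hsy : 0 < Real.sqrt y := Real.sqrt_pos.mpr (hx.trans hxy)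
  have hss : Real.sqrt x < Real.sqrt y := Real.sqrt_lt_sqrt hx.le hxy
  have h1 : 1 / Real.sqrt y < 1 / Real.sqrt x := by
    exact one_div_lt_one_div_of_lt hsx hss
  have h2 : Real.arctan (1 / Real.sqrt y) < Real.arctan (1 / Real.sqrt x) :=
    Real.arctan_strictMono h1
  have h3 : 2 / Real.sqrt y < 2 / Real.sqrt x := by
    apply div_lt_div_of_pos_left (by norm_num) hsx hss
  have h4 : 0 < Real.arctan (1 / Real.sqrt y) := arctan_pos' (by positivity)
  calc snH y = 2 / Real.sqrt y * Real.arctan (1 / Real.sqrt y) := rfl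
    _ < 2 / Real.sqrt x * Real.arctan (1 / Real.sqrt x) :=
        mul_lt_mul'' h3 h2 (by positivity) h4.le
    _ = snH x := rfl

lemma snH_inj {x y : ℝ} (hx : 0 < x) (hy : 0 < y) (h : snH x = snH y) : x = y := by
  rcases lt_trichotomy x y with hlt | heq | hgt
  · exact absurd h (snH_strictAnti hx hlt).ne'
  · exact heq
  · exact absurd h (snH_strictAnti hy hgt).ne

lemma snH_continuousOn : ContinuousOn snH (Set.Ioi 0) := by
  have hsq : ∀ x ∈ Set.Ioi (0:ℝ), Real.sqrt x ≠ 0 := fun x hx =>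
    (Real.sqrt_pos.mpr hx).ne'
  apply ContinuousOn.mul
  · exact ContinuousOn.div continuousOn_const Real.continuous_sqrt.continuousOn hsq
  · exact Real.continuous_arctan.comp_continuousOn
      (ContinuousOn.div continuousOn_const Real.continuous_sqrt.continuousOn hsq)

lemma snH_surj {y : ℝ} (hy : 0 < y) : ∃ x, 0 < x ∧ snH x = y := by
  -- lower end point a : snH a > y, upper end point b : snH b < y
  set a : ℝ := min 1 ((π / (4 * y)) ^ 2) with ha_def
  have hpi := Real.pi_pos
  have ha0 : 0 < a := lt_min one_pos (by positivity)
  have hsa : 0 < Real.sqrt a := Real.sqrt_pos.mpr ha0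
  have hsa1 : Real.sqrt a ≤ π / (4 * y) := by
    calc Real.sqrt a ≤ Real.sqrt ((π / (4 * y)) ^ 2) :=
          Real.sqrt_le_sqrt (min_le_right _ _)
      _ = π / (4 * y) := Real.sqrt_sq (by positivity)
  have ha1 : a ≤ 1 := min_le_left _ _
  have haY : y < snH a := by
    have h1 : (1:ℝ) ≤ 1 / Real.sqrt a := by
      rw [le_div_iff₀ hsa]
      simpa using Real.sqrt_le_one.mpr ha1
    have h2 : π / 4 ≤ Real.arctan (1 / Real.sqrt a) := by
      rw [← Real.arctan_one]
      exact Real.arctan_strictMono.monotone h1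
    have h3 : π / (2 * Real.sqrt a) ≤ snH a := by
      have : 2 / Real.sqrt a * (π / 4) ≤ 2 / Real.sqrt a * Real.arctan (1 / Real.sqrt a) := by
        apply mul_le_mul_of_nonneg_left h2 (by positivity)
      calc π / (2 * Real.sqrt a) = 2 / Real.sqrt a * (π / 4) := by ring
        _ ≤ snH a := this
    have h4 : y < π / (2 * Real.sqrt a) := by
      rw [lt_div_iff₀ (by positivity)]
      calc y * (2 * Real.sqrt a) ≤ y * (2 * (π / (4 * y))) := by
            apply mul_le_mul_of_nonneg_left (by linarith) hy.le
        _ = π / 2 := by field_simp; ring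
        _ < π := by linarith
    linarith
  set b : ℝ := max (2 / y + 1) (a + 1) with hb_def
  have hb0 : 0 < b := lt_of_lt_of_le (by positivity) (le_max_left _ _)
  have hsb : 0 < Real.sqrt b := Real.sqrt_pos.mpr hb0
  have hab : a < b := lt_of_lt_of_le (by linarith) (le_max_right _ _)
  have hbY : snH b < y := by
    have h1 : Real.arctan (1 / Real.sqrt b) ≤ 1 / Real.sqrt b :=
      arctan_le_self' (by positivity)
    have h2 : snH b ≤ 2 / b := by
      calc snH b ≤ 2 / Real.sqrt b * (1 / Real.sqrt b) := by
            apply mul_le_mul_of_nonneg_left h1 (by positivity)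
        _ = 2 / (Real.sqrt b * Real.sqrt b) := by ring
        _ = 2 / b := by rw [Real.mul_self_sqrt hb0.le]
    have h3 : 2 / b < y := by
      rw [div_lt_iff₀ hb0]
      have : 2 / y + 1 ≤ b := le_max_left _ _
      have h4 : 2 / y < b := by linarith
      calc (2:ℝ) = y * (2 / y) := by field_simp
        _ < y * b := by exact mul_lt_mul_of_pos_left h4 hy
    linarith
  have hsub : Set.Icc a b ⊆ Set.Ioi (0:ℝ) := fun t ht => lt_of_lt_of_le ha0 ht.1
  have hIVT := intermediate_value_Icc' hab.le (snH_continuousOn.mono hsub)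
  have hyIcc : y ∈ Set.Icc (snH b) (snH a) := ⟨hbY.le, haY.le⟩
  obtain ⟨x, hx, hxy⟩ := hIVT hyIcc
  exact ⟨x, lt_of_lt_of_le ha0 hx.1, hxy⟩

lemma snH_eq {x : ℝ} (hx : 0 < x) :
    snH x = π / Real.sqrt x - 2 * Real.arctan (Real.sqrt x) / Real.sqrt x := by
  have hs : 0 < Real.sqrt x := Real.sqrt_pos.mpr hx
  have h1 : Real.arctan (1 / Real.sqrt x) = π / 2 - Real.arctan (Real.sqrt x) := by
    rw [one_div]
    exact Real.arctan_inv_of_pos hs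
  rw [snH, h1]
  field_simp

lemma snR_bounds {x : ℝ} (hx : 0 < x) :
    0 < 2 * Real.arctan (Real.sqrt x) / Real.sqrt x ∧
      2 * Real.arctan (Real.sqrt x) / Real.sqrt x ≤ 2 := by
  have hs : 0 < Real.sqrt x := Real.sqrt_pos.mpr hx
  have h1 : 0 < Real.arctan (Real.sqrt x) := arctan_pos' hs
  have h2 : Real.arctan (Real.sqrt x) ≤ Real.sqrt x := arctan_le_self' hs.le
  constructor
  · positivity
  · rw [div_le_iff₀ hs]
    nlinarith

theorem saddleNodeC_inverse_curve (p : ℝ) (hp : 0 < p) :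
    ∃ δ₀ > (0 : ℝ), ∃ E : ℝ → ℝ,
      (∀ δ ∈ Set.Ioo (0 : ℝ) δ₀,
        0 < E δ ∧ sandleNodeC (E δ) = p * sandleNodeC δ ∧
          ∀ ε' : ℝ, 0 < ε' → sandleNodeC ε' = p * sandleNodeC δ → ε' = E δ) ∧
      Filter.Tendsto (fun δ => E δ / δ) (nhdsWithin 0 (Set.Ioi 0)) (nhds 1) := by
  set L := Real.log p with hL
  obtain ⟨δ₀, hδ₀, hδ₀L⟩ := snH_surj (y := |L| + 1) (by positivity)
  refine ⟨δ₀, hδ₀, ?_⟩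
  have hpi := Real.pi_pos
  -- key: for δ ∈ Ioo 0 δ₀, snH δ - L > 0 and existence of solution
  have hkey : ∀ δ ∈ Set.Ioo (0:ℝ) δ₀, ∃ x, 0 < x ∧ snH x = snH δ - L := by
    intro δ ⟨hδ1, hδ2⟩
    have h1 : snH δ₀ < snH δ := snH_strictAnti hδ1 hδ2
    have h2 : 0 < snH δ - L := by
      have : L ≤ |L| := le_abs_self L
      linarith [hδ₀L ▸ h1]
    exact snH_surj h2
  classical
  set E : ℝ → ℝ := fun δ => if h : δ ∈ Set.Ioo (0:ℝ) δ₀ then (hkey δ h).choose else 1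
    with hE_def
  have hE_pos : ∀ δ ∈ Set.Ioo (0:ℝ) δ₀, 0 < E δ := by
    intro δ h
    simp only [hE_def, dif_pos h]
    exact (hkey δ h).choose_spec.1
  have hE_eq : ∀ δ ∈ Set.Ioo (0:ℝ) δ₀, snH (E δ) = snH δ - L := by
    intro δ h
    simp only [hE_def, dif_pos h]
    exact (hkey δ h).choose_spec.2
  -- transfer equations between C and snH
  have hCiff : ∀ δ ∈ Set.Ioo (0:ℝ) δ₀, ∀ x : ℝ,
      (sandleNodeC x = p * sandleNodeC δ ↔ snH x = snH δ - L) := by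
    intro δ h x
    rw [sandleNodeC_eq, sandleNodeC_eq]
    rw [show p * Real.exp (-(snH δ)) = Real.exp (L - snH δ) by
      rw [Real.exp_sub, hL, Real.exp_log hp, Real.exp_neg]; ring]
    rw [Real.exp_eq_exp]
    constructor <;> intro h' <;> linarith
  refine ⟨E, ?_, ?_⟩
  · intro δ hδ
    refine ⟨hE_pos δ hδ, (hCiff δ hδ (E δ)).mpr (hE_eq δ hδ), ?_⟩
    intro ε' hε' hC
    have h1 : snH ε' = snH δ - L := (hCiff δ hδ ε').mp hC
    exact snH_inj hε' (hE_pos δ hδ) (h1.trans (hE_eq δ hδ).symm)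
  · -- the limit
    set M : ℝ := (|L| + 2) / π with hM
    have hM0 : 0 ≤ M := by positivity
    -- step 1: √δ / √(E δ) → 1
    have hstep : ∀ δ ∈ Set.Ioo (0:ℝ) δ₀,
        |Real.sqrt δ / Real.sqrt (E δ) - 1| ≤ M * Real.sqrt δ := by
      intro δ hδ
      have hδ1 := hδ.1
      have hEδ := hE_pos δ hδ
      have hsδ : 0 < Real.sqrt δ := Real.sqrt_pos.mpr hδ1
      have hsE : 0 < Real.sqrt (E δ) := Real.sqrt_pos.mpr hEδ
      have heq := hE_eq δ hδ
      rw [snH_eq hδ1, snH_eq hEδ] at heq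
      set rδ := 2 * Real.arctan (Real.sqrt δ) / Real.sqrt δ with hrδ
      set rE := 2 * Real.arctan (Real.sqrt (E δ)) / Real.sqrt (E δ) with hrE
      obtain ⟨hrδ1, hrδ2⟩ := snR_bounds hδ1
      obtain ⟨hrE1, hrE2⟩ := snR_bounds hEδ
      -- heq : π / √E - rE = π / √δ - rδ - L
      -- so √δ/√E - 1 = √δ * (rE - rδ - L) / π
      have hratio : Real.sqrt δ / Real.sqrt (E δ) - 1 =
          Real.sqrt δ * (rE - rδ - L) / π := by
        have h2 : π / Real.sqrt (E δ) = π / Real.sqrt δ - rδ - L + rE := by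
          linarith
        rw [eq_div_iff hpi.ne']
        have h4 : π * (Real.sqrt δ / Real.sqrt (E δ)) =
            Real.sqrt δ * (π / Real.sqrt δ - rδ - L + rE) := by rw [← h2]; ring
        have h5 : Real.sqrt δ * (π / Real.sqrt δ) = π := by field_simp
        linear_combination h4 + h5
      rw [hratio]
      rw [abs_div, abs_of_pos hpi, abs_mul, abs_of_pos hsδ]
      rw [hM, div_mul_eq_mul_div, mul_comm (|L| + 2), div_le_div_iff_of_pos_right hpi]
      apply mul_le_mul_of_nonneg_left _ hsδ.le
      calc |rE - rδ - L| ≤ |rE - rδ| + |L| := abs_sub _ _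
        _ ≤ 2 + |L| := by
            apply add_le_add_left
            rw [abs_sub_le_iff]
            constructor <;> linarith
        _ = |L| + 2 := by ring
    have hsqrt_to_0 : Filter.Tendsto (fun δ : ℝ => M * Real.sqrt δ)
        (nhdsWithin 0 (Set.Ioi 0)) (nhds 0) := by
      have : Filter.Tendsto Real.sqrt (nhdsWithin 0 (Set.Ioi 0)) (nhds 0) := by
        have := (Real.continuous_sqrt.tendsto 0).mono_left
          (nhdsWithin_le_nhds (s := Set.Ioi (0:ℝ)))
        simpa using this
      simpa using this.const_mul M
    have hmem : ∀ᶠ δ in nhdsWithin (0:ℝ) (Set.Ioi 0), δ ∈ Set.Ioo (0:ℝ) δ₀ := by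
      filter_upwards [self_mem_nhdsWithin,
        eventually_nhdsWithin_of_eventually_nhds (eventually_lt_nhds hδ₀)] with δ h1 h2
      exact ⟨h1, h2⟩
    have hf1 : Filter.Tendsto (fun δ => Real.sqrt δ / Real.sqrt (E δ))
        (nhdsWithin 0 (Set.Ioi 0)) (nhds 1) := by
      rw [← tendsto_sub_nhds_zero_iff]
      have h0 : Filter.Tendsto (fun δ => Real.sqrt δ / Real.sqrt (E δ) - 1)
          (nhdsWithin (0:ℝ) (Set.Ioi 0)) (nhds 0) := by
        apply squeeze_zero_norm' _ hsqrt_to_0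
        filter_upwards [hmem] with δ hδ
        simpa using hstep δ hδ
      exact h0
    have hf2 : Filter.Tendsto (fun δ => Real.sqrt (E δ) / Real.sqrt δ)
        (nhdsWithin 0 (Set.Ioi 0)) (nhds 1) := by
      have h1 : Filter.Tendsto (fun δ => (Real.sqrt δ / Real.sqrt (E δ))⁻¹)
          (nhdsWithin (0:ℝ) (Set.Ioi 0)) (nhds 1) := by
        simpa using hf1.inv₀ one_ne_zero
      apply h1.congr'
      filter_upwards [hmem] with δ hδ
      have hsδ : Real.sqrt δ ≠ 0 := (Real.sqrt_pos.mpr hδ.1).ne'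
      have hsE : Real.sqrt (E δ) ≠ 0 := (Real.sqrt_pos.mpr (hE_pos δ hδ)).ne'
      rw [inv_div]
    have hf3 : Filter.Tendsto (fun δ => (Real.sqrt (E δ) / Real.sqrt δ) ^ 2)
        (nhdsWithin (0:ℝ) (Set.Ioi 0)) (nhds 1) := by
      have := hf2.pow 2
      simpa using this
    apply hf3.congr'
    filter_upwards [hmem] with δ hδ
    rw [div_pow, Real.sq_sqrt (hE_pos δ hδ).le, Real.sq_sqrt hδ.1.le]
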